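/- arXiv:0804.2663 — 2 statements merged into one kernel-verified Lean document; each statement's English description precedes it below -/
import Mathlib

section
/- In the category of globular sets (presheaves on the globe category 𝔾), the boundary inclusion ι(n+2) : ∂y(n+2) → y(n+2) is characterized by a pushout: ∂y(n+2) is the pushout of y(σ_n), y(τ_n) : y(n) ⇉ y(n+1) along themselves, i.e. the pushout of [y(σ_n), y(τ_n)] : y(n)+y(n) → y(n+1) with itself, and ι(n+2) is induced by y(σ_{n+1}) and y(τ_{n+1}). -/
open CategoryTheory

/-- Morphisms of the globe category `𝔾`: for `m < n` there are exactly two morphisms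
`m ⟶ n` (the source and target inclusions), plus identities. -/
inductive GHom : ℕ → ℕ → Type
  | id : (n : ℕ) → GHom n n
  | sig : {m n : ℕ} → m < n → GHom m n
  | tau : {m n : ℕ} → m < n → GHom m n

/-- Composition in the globe category: by the coglobular relations, the composite of a
non-identity morphism with anything has the type of the first (lowest-dimensional) factor. -/
def GHom.comp : {a b c : ℕ} → GHom a b → GHom b c → GHom a c
  | _, _, _, .id _, g => g
  | _, _, _, .sig h, .id _ => .sig h
  | _, _, _, .sig h, .sig h' => .sig (h.trans h')
  | _, _, _, .sig h, .tau h' => .sig (h.trans h')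
  | _, _, _, .tau h, .id _ => .tau h
  | _, _, _, .tau h, .sig h' => .tau (h.trans h')
  | _, _, _, .tau h, .tau h' => .tau (h.trans h')

theorem GHom.comp_id : ∀ {a b : ℕ} (f : GHom a b), f.comp (GHom.id b) = f := by
  intro a b f
  cases f <;> rfl

theorem GHom.comp_assoc : ∀ {a b c d : ℕ} (f : GHom a b) (g : GHom b c) (h : GHom c d),
    (f.comp g).comp h = f.comp (g.comp h) := by
  intro a b c d f g h
  cases f <;> cases g <;> cases h <;> rfl

/-- Any morphism of `𝔾` weakly increases dimension. -/
theorem GHom.le {m n : ℕ} (f : GHom m n) : m ≤ n := by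
  cases f with
  | id => exact le_refl _
  | sig h => exact h.le
  | tau h => exact h.le

/-- The objects of the globe category `𝔾`. -/
structure Globe where
  dim : ℕ

instance : Category Globe where
  Hom a b := GHom a.dim b.dim
  id a := GHom.id a.dim
  comp f g := f.comp g
  id_comp f := rfl
  comp_id f := GHom.comp_id f
  assoc f g h := GHom.comp_assoc f g h

/-- The cosource map `σ_n : n ⟶ n + 1` in `𝔾`. -/
def sigma' (n : ℕ) : Globe.mk n ⟶ Globe.mk (n + 1) := GHom.sig (Nat.lt_succ_self n)

/-- The cotarget map `τ_n : n ⟶ n + 1` in `𝔾`. -/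
def tau' (n : ℕ) : Globe.mk n ⟶ Globe.mk (n + 1) := GHom.tau (Nat.lt_succ_self n)

/-- The boundary `∂y(m)` of the representable globular set `y(m)`: the subpresheaf of `y(m)`
consisting of the cells of dimension `< m`. -/
def bdry (m : ℕ) : Globeᵒᵖ ⥤ Type where
  obj k := { f : GHom k.unop.dim m // k.unop.dim < m }
  map {k k'} g := TypeCat.ofHom (fun f => ⟨GHom.comp g.unop f.1, lt_of_le_of_lt (GHom.le g.unop) f.2⟩)
  map_id k := by ext f; rfl
  map_comp {k k' k''} g g' := by
    ext f
    exact GHom.comp_assoc g'.unop g.unop f.1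

/-- The boundary inclusion `ι(m) : ∂y(m) ⟶ y(m)`. -/
def bdryIncl (m : ℕ) : bdry m ⟶ yoneda.obj (Globe.mk m) where
  app k := TypeCat.ofHom (fun f => f.1)
  naturality k k' g := rfl

/-- The map `y(n+1) ⟶ ∂y(n+2)` given by postcomposition with `σ_{n+1}`. -/
def sigInto (n : ℕ) : yoneda.obj (Globe.mk (n + 1)) ⟶ bdry (n + 2) where
  app k := TypeCat.ofHom (fun f => ⟨GHom.comp f (sigma' (n + 1)), lt_of_le_of_lt (GHom.le f) (Nat.lt_succ_self _)⟩)
  naturality k k' g := by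
    ext f
    apply Subtype.ext
    exact GHom.comp_assoc g.unop f (sigma' (n + 1))

/-- The map `y(n+1) ⟶ ∂y(n+2)` given by postcomposition with `τ_{n+1}`. -/
def tauInto (n : ℕ) : yoneda.obj (Globe.mk (n + 1)) ⟶ bdry (n + 2) where
  app k := TypeCat.ofHom (fun f => ⟨GHom.comp f (tau' (n + 1)), lt_of_le_of_lt (GHom.le f) (Nat.lt_succ_self _)⟩)
  naturality k k' g := by
    ext f
    apply Subtype.ext
    exact GHom.comp_assoc g.unop f (tau' (n + 1))

-- auxiliary definitions

def sDown {d n : ℕ} (hd : d < n + 2) : GHom d (n + 1) :=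
  if h : d = n + 1 then cast (by rw [h]) (GHom.id d) else GHom.sig (by omega)

def tDown {d n : ℕ} (hd : d < n + 2) : GHom d (n + 1) :=
  if h : d = n + 1 then cast (by rw [h]) (GHom.id d) else GHom.tau (by omega)

theorem sDown_comp_sig {d n : ℕ} (hd : d < n + 2) :
    (sDown hd).comp (GHom.sig (Nat.lt_succ_self (n+1))) = GHom.sig hd := by
  unfold sDown; split
  · rename_i h; subst h; rfl
  · rfl

theorem tDown_comp_tau {d n : ℕ} (hd : d < n + 2) :
    (tDown hd).comp (GHom.tau (Nat.lt_succ_self (n+1))) = GHom.tau hd := by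
  unfold tDown; split
  · rename_i h; subst h; rfl
  · rfl

theorem sDown_of_lt {d n : ℕ} (hd : d < n + 2) (h : d < n + 1) :
    sDown hd = GHom.sig h := by
  unfold sDown; rw [dif_neg (by omega)]

theorem tDown_of_lt {d n : ℕ} (hd : d < n + 2) (h : d < n + 1) :
    tDown hd = GHom.tau h := by
  unfold tDown; rw [dif_neg (by omega)]

theorem sDown_top {n : ℕ} (hd : n + 1 < n + 2) : sDown hd = GHom.id (n+1) := by
  unfold sDown; rw [dif_pos rfl]; rfl

theorem tDown_top {n : ℕ} (hd : n + 1 < n + 2) : tDown hd = GHom.id (n+1) := by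
  unfold tDown; rw [dif_pos rfl]; rfl

section Key

variable {n : ℕ} {W : Globeᵒᵖ ⥤ Type} (u v : yoneda.obj (Globe.mk (n + 1)) ⟶ W)

/-- Under the pushout condition, `u` and `v` agree on all non-identity cells. -/
theorem key (h1 : yoneda.map (sigma' n) ≫ u = yoneda.map (sigma' n) ≫ v)
    (h2 : yoneda.map (tau' n) ≫ u = yoneda.map (tau' n) ≫ v)
    (k : Globeᵒᵖ) (x : GHom k.unop.dim (n + 1)) (hx : k.unop.dim < n + 1) :
    u.app k x = v.app k x := by
  obtain ⟨⟨d⟩⟩ := k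
  cases x with
  | id => exact absurd hx (lt_irrefl _)
  | sig h =>
    rcases Nat.lt_succ_iff_lt_or_eq.mp h with h' | h'
    · exact types_congr_hom (NatTrans.congr_app h1 (Opposite.op ⟨d⟩)) (GHom.sig h')
    · subst h'
      exact types_congr_hom (NatTrans.congr_app h1 (Opposite.op ⟨d⟩)) (GHom.id d)
  | tau h =>
    rcases Nat.lt_succ_iff_lt_or_eq.mp h with h' | h'
    · exact types_congr_hom (NatTrans.congr_app h1 (Opposite.op ⟨d⟩)) (GHom.tau h')
    · subst h'
      exact types_congr_hom (NatTrans.congr_app h2 (Opposite.op ⟨d⟩)) (GHom.id d)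


/-- The component function of the descent map. -/
def descAuxApp : {d : ℕ} → GHom d (n + 2) → d < n + 2 → W.obj (Opposite.op ⟨d⟩)
  | _, GHom.sig _, hf => u.app _ (sDown hf)
  | _, GHom.tau _, hf => v.app _ (tDown hf)
  | _, GHom.id _, hf => absurd hf (lt_irrefl _)

/-- The descent map `∂y(n+2) ⟶ W` induced by `u` and `v`. -/
def descAux (h1 : yoneda.map (sigma' n) ≫ u = yoneda.map (sigma' n) ≫ v)
    (h2 : yoneda.map (tau' n) ≫ u = yoneda.map (tau' n) ≫ v) :
    bdry (n + 2) ⟶ W where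
  app k := TypeCat.ofHom (fun f => descAuxApp u v f.1 f.2)
  naturality k k' g := by
    obtain ⟨⟨dk⟩⟩ := k
    obtain ⟨⟨dk'⟩⟩ := k'
    refine ConcreteCategory.hom_ext _ _ (fun f => ?_)
    obtain ⟨f, hf⟩ := f
    have nu : ∀ x : GHom dk (n+1), u.app (Opposite.op ⟨dk'⟩) (GHom.comp g.unop x)
        = W.map g (u.app (Opposite.op ⟨dk⟩) x) := fun x => types_congr_hom (u.naturality g) x
    have nv : ∀ x : GHom dk (n+1), v.app (Opposite.op ⟨dk'⟩) (GHom.comp g.unop x)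
        = W.map g (v.app (Opposite.op ⟨dk⟩) x) := fun x => types_congr_hom (v.naturality g) x
    show descAuxApp u v (GHom.comp g.unop f) _ = W.map g (descAuxApp u v f hf)
    cases f with
    | id => exact absurd hf (lt_irrefl _)
    | sig h =>
      rw [show descAuxApp u v (GHom.sig h) hf = u.app (Opposite.op ⟨dk⟩) (sDown hf) from rfl,
        ← nu (sDown hf)]
      cases hg : g.unop using GHom.casesOn with
      | id => rfl
      | sig h' =>
        have hlt : dk' < n + 1 := lt_of_lt_of_le h' (Nat.lt_succ_iff.mp hf)
        show u.app _ (sDown _) = u.app _ (GHom.comp (GHom.sig h') (sDown hf))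
        rw [sDown_of_lt _ hlt]
        cases hs : (sDown hf : GHom dk (n+1)) <;> rfl
      | tau h' =>
        have hlt : dk' < n + 1 := lt_of_lt_of_le h' (Nat.lt_succ_iff.mp hf)
        show v.app _ (tDown _) = u.app _ (GHom.comp (GHom.tau h') (sDown hf))
        rw [tDown_of_lt _ hlt]
        have : GHom.comp (GHom.tau h') (sDown hf) = GHom.tau hlt := by
          cases hs : (sDown hf : GHom dk (n+1)) <;> rfl
        rw [this]
        exact (key u v h1 h2 (Opposite.op ⟨dk'⟩) (GHom.tau _) hlt).symm
    | tau h =>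
      rw [show descAuxApp u v (GHom.tau h) hf = v.app (Opposite.op ⟨dk⟩) (tDown hf) from rfl,
        ← nv (tDown hf)]
      cases hg : g.unop using GHom.casesOn with
      | id => rfl
      | sig h' =>
        have hlt : dk' < n + 1 := lt_of_lt_of_le h' (Nat.lt_succ_iff.mp hf)
        show u.app _ (sDown _) = v.app _ (GHom.comp (GHom.sig h') (tDown hf))
        rw [sDown_of_lt _ hlt]
        have : GHom.comp (GHom.sig h') (tDown hf) = GHom.sig hlt := by
          cases hs : (tDown hf : GHom dk (n+1)) <;> rfl
        rw [this]
        exact key u v h1 h2 (Opposite.op ⟨dk'⟩) (GHom.sig _) hlt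
      | tau h' =>
        have hlt : dk' < n + 1 := lt_of_lt_of_le h' (Nat.lt_succ_iff.mp hf)
        show v.app _ (tDown _) = v.app _ (GHom.comp (GHom.tau h') (tDown hf))
        rw [tDown_of_lt _ hlt]
        cases hs : (tDown hf : GHom dk (n+1)) <;> rfl

end Key

theorem sig_comm (n : ℕ) :
    yoneda.map (sigma' n) ≫ sigInto n = yoneda.map (sigma' n) ≫ tauInto n := by
  apply NatTrans.ext
  funext k
  refine ConcreteCategory.hom_ext _ _ (fun x => ?_)
  apply Subtype.ext
  show GHom.comp (GHom.comp x (sigma' n)) (sigma' (n+1))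
      = GHom.comp (GHom.comp x (sigma' n)) (tau' (n+1))
  cases x <;> rfl

theorem tau_comm (n : ℕ) :
    yoneda.map (tau' n) ≫ sigInto n = yoneda.map (tau' n) ≫ tauInto n := by
  apply NatTrans.ext
  funext k
  refine ConcreteCategory.hom_ext _ _ (fun x => ?_)
  apply Subtype.ext
  show GHom.comp (GHom.comp x (tau' n)) (sigma' (n+1))
      = GHom.comp (GHom.comp x (tau' n)) (tau' (n+1))
  cases x <;> rfl

/-- `∂y(n+2)` is the pushout of `[y(σ_n), y(τ_n)] : y(n) + y(n) → y(n+1)` with itself, and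
the boundary inclusion `ι(n+2) : ∂y(n+2) → y(n+2)` is induced by `y(σ_{n+1})` and
`y(τ_{n+1})`. -/
theorem stmt16 (n : ℕ) :
    IsPushout (Limits.coprod.desc (yoneda.map (sigma' n)) (yoneda.map (tau' n)))
        (Limits.coprod.desc (yoneda.map (sigma' n)) (yoneda.map (tau' n)))
        (sigInto n) (tauInto n) ∧
      sigInto n ≫ bdryIncl (n + 2) = yoneda.map (sigma' (n + 1)) ∧
      tauInto n ≫ bdryIncl (n + 2) = yoneda.map (tau' (n + 1)) := by
  have w : CommSq (Limits.coprod.desc (yoneda.map (sigma' n)) (yoneda.map (tau' n)))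
      (Limits.coprod.desc (yoneda.map (sigma' n)) (yoneda.map (tau' n)))
      (sigInto n) (tauInto n) := ⟨by
    apply Limits.coprod.hom_ext <;>
      simp only [Limits.coprod.inl_desc_assoc, Limits.coprod.inr_desc_assoc, sig_comm, tau_comm]⟩
  refine ⟨IsPushout.of_isColimit' w ?_, rfl, by
    apply NatTrans.ext; funext k; exact ConcreteCategory.hom_ext _ _ (fun x => rfl)⟩
  apply Limits.PushoutCocone.IsColimit.mk w.w
    (fun s => descAux s.inl s.inr ?h1 ?h2) ?_ ?_ ?_
  case h1 =>
    have h := congrArg (fun t => Limits.coprod.inl ≫ t) s.condition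
    simpa only [Limits.coprod.inl_desc_assoc] using h
  case h2 =>
    have h := congrArg (fun t => Limits.coprod.inr ≫ t) s.condition
    simpa only [Limits.coprod.inr_desc_assoc] using h
  · -- fac_left
    intro s
    have h1 : yoneda.map (sigma' n) ≫ s.inl = yoneda.map (sigma' n) ≫ s.inr := by
      have h := congrArg (fun t => Limits.coprod.inl ≫ t) s.condition
      simpa only [Limits.coprod.inl_desc_assoc] using h
    have h2 : yoneda.map (tau' n) ≫ s.inl = yoneda.map (tau' n) ≫ s.inr := by
      have h := congrArg (fun t => Limits.coprod.inr ≫ t) s.condition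
      simpa only [Limits.coprod.inr_desc_assoc] using h
    apply NatTrans.ext
    funext k
    refine ConcreteCategory.hom_ext _ _ (fun x => ?_)
    obtain ⟨⟨d⟩⟩ := k
    cases x with
    | id =>
      show s.inl.app (Opposite.op ⟨n+1⟩) (sDown (Nat.lt_succ_self (n+1)))
          = s.inl.app (Opposite.op ⟨n+1⟩) (GHom.id (n+1))
      rw [sDown_top]
    | sig h =>
      show s.inl.app (Opposite.op ⟨d⟩) (sDown (h.trans (Nat.lt_succ_self (n+1))))
          = s.inl.app _ (GHom.sig h)
      rw [sDown_of_lt _ h]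
    | tau h =>
      show s.inr.app (Opposite.op ⟨d⟩) (tDown (h.trans (Nat.lt_succ_self (n+1))))
          = s.inl.app _ (GHom.tau h)
      rw [tDown_of_lt _ h]
      exact (key s.inl s.inr h1 h2 (Opposite.op ⟨d⟩) (GHom.tau h) h).symm
  · -- fac_right
    intro s
    have h1 : yoneda.map (sigma' n) ≫ s.inl = yoneda.map (sigma' n) ≫ s.inr := by
      have h := congrArg (fun t => Limits.coprod.inl ≫ t) s.condition
      simpa only [Limits.coprod.inl_desc_assoc] using h
    have h2 : yoneda.map (tau' n) ≫ s.inl = yoneda.map (tau' n) ≫ s.inr := by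
      have h := congrArg (fun t => Limits.coprod.inr ≫ t) s.condition
      simpa only [Limits.coprod.inr_desc_assoc] using h
    apply NatTrans.ext
    funext k
    refine ConcreteCategory.hom_ext _ _ (fun x => ?_)
    obtain ⟨⟨d⟩⟩ := k
    cases x with
    | id =>
      show s.inr.app (Opposite.op ⟨n+1⟩) (tDown (Nat.lt_succ_self (n+1)))
          = s.inr.app (Opposite.op ⟨n+1⟩) (GHom.id (n+1))
      rw [tDown_top]
    | sig h =>
      show s.inl.app (Opposite.op ⟨d⟩) (sDown (h.trans (Nat.lt_succ_self (n+1))))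
          = s.inr.app _ (GHom.sig h)
      rw [sDown_of_lt _ h]
      exact key s.inl s.inr h1 h2 (Opposite.op ⟨d⟩) (GHom.sig h) h
    | tau h =>
      show s.inr.app (Opposite.op ⟨d⟩) (tDown (h.trans (Nat.lt_succ_self (n+1))))
          = s.inr.app _ (GHom.tau h)
      rw [tDown_of_lt _ h]
  · -- uniq
    intro s m hm1 hm2
    apply NatTrans.ext
    funext k
    refine ConcreteCategory.hom_ext _ _ (fun f => ?_)
    obtain ⟨⟨d⟩⟩ := k
    obtain ⟨f, hf⟩ := f
    cases f with
    | id => exact absurd hf (lt_irrefl _)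
    | sig h =>
      have e0 : (⟨GHom.sig h, hf⟩ : (bdry (n+2)).obj (Opposite.op ⟨d⟩))
          = (sigInto n).app (Opposite.op ⟨d⟩) (sDown hf) :=
        Subtype.ext (sDown_comp_sig hf).symm
      have e1 := types_congr_hom (NatTrans.congr_app hm1 (Opposite.op (Globe.mk d))) (sDown hf)
      conv_lhs => rw [e0]
      exact e1
    | tau h =>
      have e0 : (⟨GHom.tau h, hf⟩ : (bdry (n+2)).obj (Opposite.op ⟨d⟩))
          = (tauInto n).app (Opposite.op ⟨d⟩) (tDown hf) :=
        Subtype.ext (tDown_comp_tau hf).symm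
      have e1 := types_congr_hom (NatTrans.congr_app hm2 (Opposite.op (Globe.mk d))) (tDown hf)
      conv_lhs => rw [e0]
      exact e1
end

section
/- For a direct category A (one admitting an identity-reflecting functor dim : A → γ to an ordinal γ), the canonical map ι(a) : ∂y(a) → y(a), from the coend ∂y(a) = ∫^{b : dim b < dim a} A(b,a) · y(b) to the representable y(a), is a monomorphism of presheaves. -/
open CategoryTheory

universe u w

variable {A : Type u} [SmallCategory A] {γ : Type w} [LinearOrder γ] [WellFoundedLT γ]

/-- The diagram whose quotient is the coend `∂y(a) = ∫^{b, dim b < dim a} A(b,a) · y(b)`: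
at stage `c`, triples `(b, g : b ⟶ a, f : c ⟶ b)` with `dim b < dim a`. -/
def BdryIndex (dim : A ⥤ γ) (a c : A) : Type u :=
  Σ' (b : A) (_ : dim.obj b < dim.obj a), (c ⟶ b) × (b ⟶ a)

/-- The coend relation: `(b, g, h ≫ f') ~ (b', g ≫ h, f')` for `h : b ⟶ b'`. -/
def BdryRel (dim : A ⥤ γ) (a c : A) : BdryIndex dim a c → BdryIndex dim a c → Prop :=
  fun x y => ∃ h : x.1 ⟶ y.1, x.2.2.1 ≫ h = y.2.2.1 ∧ x.2.2.2 = h ≫ y.2.2.2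

/-- The boundary `∂y(a)`, as the coend `∫^{b, dim b < dim a} A(b,a) · y(b)` computed
pointwise as a quotient. -/
def bdryCoend (dim : A ⥤ γ) (a : A) : Aᵒᵖ ⥤ Type u where
  obj c := Quot (BdryRel dim a c.unop)
  map {c c'} g :=
    TypeCat.ofHom (Quot.map (fun x => ⟨x.1, x.2.1, g.unop ≫ x.2.2.1, x.2.2.2⟩)
      (fun x y hxy => by
        obtain ⟨h, h1, h2⟩ := hxy
        exact ⟨h, by simp [← h1], h2⟩))
  map_id c := by
    ext x
    induction x using Quot.ind with
    | _ x =>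
      obtain ⟨b, hb, f, g⟩ := x
      exact congrArg (Quot.mk _) (by simp <;> rfl)
  map_comp {c c' c''} g g' := by
    ext x
    induction x using Quot.ind with
    | _ x =>
      obtain ⟨b, hb, f, g₀⟩ := x
      exact congrArg (Quot.mk _) (by simp <;> rfl)

/-- The canonical map `ι(a) : ∂y(a) ⟶ y(a)`, sending `(b, g, f)` to `f ≫ g`. -/
def bdryCoendIncl (dim : A ⥤ γ) (a : A) : bdryCoend dim a ⟶ yoneda.obj a where
  app c := TypeCat.ofHom (Quot.lift (fun (x : BdryIndex dim a c.unop) => x.2.2.1 ≫ x.2.2.2)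
    (fun x y hxy => by
      obtain ⟨b, hb, f, g⟩ := x
      obtain ⟨b', hb', f', g'⟩ := y
      obtain ⟨h, h1, h2⟩ := hxy
      dsimp at h1 h2 ⊢
      rw [h2, ← h1, Category.assoc]))
  naturality c c' g := by
    ext x
    induction x using Quot.ind with
    | _ x =>
      obtain ⟨b, hb, f, g₀⟩ := x
      exact Category.assoc _ _ _

/-- For a direct category `A` (with an identity-reflecting functor `dim` to an ordinal `γ`),
the canonical map `ι(a) : ∂y(a) → y(a)` from the coend to the representable is a
monomorphism of presheaves. -/
theorem bdryCoendIncl_mono (dim : A ⥤ γ)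
    (hdim : ∀ {b b' : A} (f : b ⟶ b'), dim.obj b = dim.obj b' →
      ∃ h : b = b', f = eqToHom h)
    (a : A) : Mono (bdryCoendIncl dim a) := by
  have : ∀ c, Mono ((bdryCoendIncl dim a).app c) := by
    intro c
    rw [CategoryTheory.mono_iff_injective]
    intro x y hxy
    change Quot (BdryRel dim a c.unop) at x y
    induction x using Quot.ind with
    | _ x =>
    induction y using Quot.ind with
    | _ y =>
    obtain ⟨b, hb, f, g⟩ := x
    obtain ⟨b', hb', f', g'⟩ := y
    have hxy' : f ≫ g = f' ≫ g' := hxy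
    have hc : dim.obj c.unop < dim.obj a := lt_of_le_of_lt (leOfHom (dim.map f)) hb
    have e1 : BdryRel dim a c.unop ⟨c.unop, hc, 𝟙 _, f ≫ g⟩ ⟨b, hb, f, g⟩ :=
      ⟨f, by simp, by simp⟩
    have e2 : BdryRel dim a c.unop ⟨c.unop, hc, 𝟙 _, f ≫ g⟩ ⟨b', hb', f', g'⟩ :=
      ⟨f', by simp, by simp [hxy']⟩
    exact Quot.eqvGen_sound
      (Relation.EqvGen.trans _ _ _ (Relation.EqvGen.symm _ _ (Relation.EqvGen.rel _ _ e1)) (Relation.EqvGen.rel _ _ e2))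
  exact NatTrans.mono_of_mono_app _
end
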